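/- (5r-lemma for reparametrization balls) Let (X,φ) be a compact metric flow without fixed points, 0 < η < 1, and θ > 0 as given by the reparametrization-distortion lemma. Let ℬ = {B(x,t,ε,φ)}_{(x,t)∈ℐ} be a family of open reparametrization balls with 0 < ε < θ/2 and all t > 1/(1−η)². Then there is a finite or countable subfamily {B(x,t,ε,φ)}_{(x,t)∈ℐ'} of pairwise disjoint balls such that ∪_{B∈ℬ} B ⊆ ∪_{(x,t)∈ℐ'} B(x, (1−η)² t, 5ε, φ). -/

import Mathlib

open Set Filter Topology MeasureTheory ENNReal NNReal

variable {X : Type*}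

def IsFlow [TopologicalSpace X] (φ : ℝ → X → X) : Prop :=
  Continuous (fun p : X × ℝ => φ p.2 p.1) ∧ (∀ x, φ 0 x = x) ∧
    ∀ s t : ℝ, ∀ x : X, φ (s + t) x = φ s (φ t x)

def FixedPointFree (φ : ℝ → X → X) : Prop := ∀ x : X, ∃ t : ℝ, φ t x ≠ x

/-- A reparametrization on an interval `I` containing `0`: a continuous injective map
(hence a homeomorphism onto its image) with `α 0 = 0`. -/
def IsRepOn (I : Set ℝ) (α : ℝ → ℝ) : Prop :=
  ContinuousOn α I ∧ Set.InjOn α I ∧ α 0 = 0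

def IsRep (t : ℝ) (α : ℝ → ℝ) : Prop := IsRepOn (Set.Icc 0 t) α

/-- Open reparametrization ball `B(x,t,ε,φ)`. -/
def repBall [MetricSpace X] (φ : ℝ → X → X) (x : X) (t ε : ℝ) : Set X :=
  {y | ∃ α : ℝ → ℝ, IsRep t α ∧ ∀ s ∈ Set.Icc 0 t, dist (φ (α s) x) (φ s y) < ε}

/-- Closed reparametrization ball `B̄(x,t,ε,φ)`. -/
def repBallCl [MetricSpace X] (φ : ℝ → X → X) (x : X) (t ε : ℝ) : Set X :=
  {y | ∃ α : ℝ → ℝ, IsRep t α ∧ ∀ s ∈ Set.Icc 0 t, dist (φ (α s) x) (φ s y) ≤ ε}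

/-- A (finite or countable) packing family: pairwise disjoint closed reparametrization balls
with centers in `Z` and times at least `N`. -/
def IsPackingFamily [MetricSpace X] (φ : ℝ → X → X) (Z : Set X) (ε : ℝ) (N : ℕ)
    (I : Set ℕ) (x : ℕ → X) (t : ℕ → ℝ) : Prop :=
  (∀ i ∈ I, x i ∈ Z ∧ (N : ℝ) ≤ t i) ∧
    ∀ i ∈ I, ∀ j ∈ I, i ≠ j →
      Disjoint (repBallCl φ (x i) (t i) ε) (repBallCl φ (x j) (t j) ε)

/-- `P^s_{N,ε}(φ,Z)`. -/
noncomputable def packPre [MetricSpace X] (φ : ℝ → X → X) (Z : Set X) (s ε : ℝ) (N : ℕ) :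
    ℝ≥0∞ :=
  ⨆ (x : ℕ → X) (t : ℕ → ℝ) (I : Set ℕ) (_ : IsPackingFamily φ Z ε N I x t),
    ∑' i : I, ENNReal.ofReal (Real.exp (-(s * t i)))

/-- `P^s_ε(φ,Z) = lim_{N→∞} P^s_{N,ε}(φ,Z)` (the limit of a non-increasing sequence). -/
noncomputable def packP [MetricSpace X] (φ : ℝ → X → X) (Z : Set X) (s ε : ℝ) : ℝ≥0∞ :=
  ⨅ N : ℕ, packPre φ Z s ε N

/-- `𝒫^s_ε(Z)`. -/
noncomputable def packM [MetricSpace X] (φ : ℝ → X → X) (Z : Set X) (s ε : ℝ) : ℝ≥0∞ :=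
  ⨅ (Zs : ℕ → Set X) (_ : Z ⊆ ⋃ i, Zs i), ∑' i, packP φ (Zs i) s ε

/-- `h^P_top(φ,Z,ε) = inf{s ≥ 0 : 𝒫^s_ε(Z) = 0}`. -/
noncomputable def packEnt [MetricSpace X] (φ : ℝ → X → X) (Z : Set X) (ε : ℝ) : ℝ≥0∞ :=
  sInf (ENNReal.ofReal '' {s : ℝ | 0 ≤ s ∧ packM φ Z s ε = 0})

/-- `h^P_top(φ,Z) = lim_{ε→0} h^P_top(φ,Z,ε)` (the limit is the supremum by monotonicity). -/
noncomputable def packEntTop [MetricSpace X] (φ : ℝ → X → X) (Z : Set X) : ℝ≥0∞ :=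
  ⨆ (ε : ℝ) (_ : 0 < ε), packEnt φ Z ε

/-- The canonical map `EReal → ℝ≥0∞` (sending negatives to `0` and `⊤` to `⊤`). -/
noncomputable def erealToENNReal (x : EReal) : ℝ≥0∞ :=
  if x = ⊤ then ⊤ else ENNReal.ofReal x.toReal

/-- `limsup_{t→∞} −(1/t) log μ(B(x,t,ε,φ))`, as an extended nonnegative real. -/
noncomputable def upLocalEntAt [MetricSpace X] [MeasurableSpace X] (φ : ℝ → X → X) (μ : Measure X) (x : X)
    (ε : ℝ) : ℝ≥0∞ :=
  erealToENNReal (Filter.limsup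
    (fun t : ℝ => ((t⁻¹ : ℝ) : EReal) * (-(ENNReal.log (μ (repBall φ x t ε)))))
    Filter.atTop)

/-- The upper local entropy `h̄_μ(φ,x)`; the limit as `ε → 0` is the supremum over `ε > 0`
by monotonicity. -/
noncomputable def upLocalEnt [MetricSpace X] [MeasurableSpace X] (φ : ℝ → X → X) (μ : Measure X) (x : X) :
    ℝ≥0∞ :=
  ⨆ (ε : ℝ) (_ : 0 < ε), upLocalEntAt φ μ x ε

/-- The upper local entropy `h̄_μ(φ) = ∫ h̄_μ(φ,x) dμ(x)`. -/
noncomputable def upEnt [MetricSpace X] [MeasurableSpace X] (φ : ℝ → X → X) (μ : Measure X) : ℝ≥0∞ :=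
  ∫⁻ x, upLocalEnt φ μ x ∂μ

/-- `ℳ^s_{N,ε}(φ,Z)` for Bowen entropy. -/
noncomputable def bowenPre [MetricSpace X] (φ : ℝ → X → X) (Z : Set X) (s ε : ℝ) (N : ℕ) :
    ℝ≥0∞ :=
  ⨅ (x : ℕ → X) (t : ℕ → ℝ)
    (_ : (∀ i, (N : ℝ) ≤ t i) ∧ Z ⊆ ⋃ i, repBall φ (x i) (t i) ε),
    ∑' i, ENNReal.ofReal (Real.exp (-(s * t i)))

/-- `ℳ^s_ε(φ,Z) = lim_{N→∞} ℳ^s_{N,ε}(φ,Z)` (a non-decreasing limit). -/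
noncomputable def bowenMeps [MetricSpace X] (φ : ℝ → X → X) (Z : Set X) (s ε : ℝ) : ℝ≥0∞ :=
  ⨆ N : ℕ, bowenPre φ Z s ε N

/-- `ℳ^s(φ,Z) = lim_{ε→0} ℳ^s_ε(φ,Z)` (a non-decreasing limit as `ε` decreases). -/
noncomputable def bowenM [MetricSpace X] (φ : ℝ → X → X) (Z : Set X) (s : ℝ) : ℝ≥0∞ :=
  ⨆ (ε : ℝ) (_ : 0 < ε), bowenMeps φ Z s ε

/-- The Bowen topological entropy `h^B_top(φ,Z)`. -/
noncomputable def bowenEnt [MetricSpace X] (φ : ℝ → X → X) (Z : Set X) : ℝ≥0∞ :=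
  sInf (ENNReal.ofReal '' {s : ℝ | 0 ≤ s ∧ bowenM φ Z s = 0})

section FiveRHelpers

variable [MetricSpace X] {φ : ℝ → X → X}

lemma isRep_id' (t : ℝ) : IsRep t id :=
  ⟨continuous_id.continuousOn, Set.injOn_id _, rfl⟩

lemma self_mem_repBall' (φ : ℝ → X → X) (x : X) {t ε : ℝ} (hε : 0 < ε) :
    x ∈ repBall φ x t ε :=
  ⟨id, isRep_id' t, fun s _ => by
    show dist (φ s x) (φ s x) < ε
    rwa [dist_self]⟩

lemma interior_repBall_nonempty' [CompactSpace X] (hφ : IsFlow φ) (x : X) {t ε : ℝ}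
    (hε : 0 < ε) : (interior (repBall φ x t ε)).Nonempty := by
  obtain ⟨δ, hδ0, hδ⟩ : ∃ δ > 0, ∀ y, dist y x < δ →
      ∀ s ∈ Set.Icc 0 t, dist (φ s x) (φ s y) < ε := by
    have hK : IsCompact ((Set.univ : Set X) ×ˢ Set.Icc (0:ℝ) t) :=
      isCompact_univ.prod isCompact_Icc
    have huc := hK.uniformContinuousOn_of_continuous hφ.1.continuousOn
    rw [Metric.uniformContinuousOn_iff] at huc
    obtain ⟨δ, hδ0, H⟩ := huc ε hε
    refine ⟨δ, hδ0, fun y hy s hs => ?_⟩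
    have := H ((x, s) : X × ℝ) (by simp [hs]) ((y, s) : X × ℝ) (by simp [hs])
      (by rw [Prod.dist_eq]; simp only [dist_self]; exact max_lt (by rwa [dist_comm]) hδ0)
    simpa using this
  refine ⟨x, mem_interior.mpr ⟨Metric.ball x δ, ?_, Metric.isOpen_ball,
    Metric.mem_ball_self hδ0⟩⟩
  intro y hy
  exact ⟨id, isRep_id' t, fun s hs => hδ y (Metric.mem_ball.mp hy) s hs⟩

/-- Consequences of the distortion estimate: a reparametrization with small distortion
is strictly monotone and has controlled growth. -/
lemma rep_props' {η : ℝ} (hη0 : 0 < η) (hη1 : η < 1) {t : ℝ} (ht : 1 < t) {α : ℝ → ℝ}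
    (hα : IsRep t α)
    (H : ∀ s ∈ Set.Icc 0 t, (1 < |s| → |α s - s| < η * |s|) ∧ (|s| ≤ 1 → |α s - s| < η)) :
    StrictMonoOn α (Set.Icc 0 t) ∧ (∀ s ∈ Set.Icc 0 t, α s ≤ s + η * max s 1) ∧
      ∀ s ∈ Set.Icc 0 t, 1 < s → (1 - η) * s < α s := by
  have h0t : (0:ℝ) ≤ t := by linarith
  have hlow : ∀ s ∈ Set.Icc 0 t, 1 < s → (1 - η) * s < α s := by
    intro s hs h1s
    have habs : |s| = s := abs_of_nonneg hs.1
    have := (H s hs).1 (by rwa [habs])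
    rw [habs] at this
    have := (abs_lt.mp this).1
    nlinarith
  have hαt : 0 < α t := by
    have := hlow t ⟨h0t, le_rfl⟩ ht
    nlinarith
  have hα0 : α 0 = 0 := hα.2.2
  have hmono : StrictMonoOn α (Set.Icc 0 t) :=
    ContinuousOn.strictMonoOn_of_injOn_Icc h0t (by rw [hα0]; linarith) hα.1 hα.2.1
  refine ⟨hmono, fun s hs => ?_, hlow⟩
  have habs : |s| = s := abs_of_nonneg hs.1
  rcases le_or_gt s 1 with h|h
  · have := (H s hs).2 (by rwa [habs])
    have h2 := (abs_lt.mp this).2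
    have : max s 1 = 1 := max_eq_right h
    rw [this]
    linarith
  · have := (H s hs).1 (by rwa [habs])
    rw [habs] at this
    have h2 := (abs_lt.mp this).2
    have : max s 1 = s := max_eq_left h.le
    rw [this]
    linarith

set_option maxHeartbeats 1000000 in
/-- The geometric core of the `5r`-lemma: if two reparametrization balls intersect and the
times are comparable, then the first ball is contained in the (time-shrunk, radius-enlarged)
second ball. -/
lemma repBall_subset_enlarged (hφ : IsFlow φ) {η θ : ℝ} (hη0 : 0 < η) (hη1 : η < 1)
    (hθ : 0 < θ)
    (hdist : ∀ (x y : X) (a b : ℝ), a ≤ 0 → 0 ≤ b → ∀ α : ℝ → ℝ,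
      IsRepOn (Set.Icc a b) α →
      (∀ s ∈ Set.Icc a b, dist (φ (α s) x) (φ s y) < θ) →
      ∀ s ∈ Set.Icc a b, (1 < |s| → |α s - s| < η * |s|) ∧ (|s| ≤ 1 → |α s - s| < η))
    {ε : ℝ} (hε0 : 0 < ε) (hεθ : ε < θ / 2)
    {x₁ x₂ : X} {t₁ t₂ : ℝ} (ht₁ : 1 / (1 - η) ^ 2 < t₁) (ht₂ : 1 / (1 - η) ^ 2 < t₂)
    (hcomp : (1 - η ^ 2) * t₂ ≤ t₁)
    (hmeet : ¬ Disjoint (repBall φ x₁ t₁ ε) (repBall φ x₂ t₂ ε)) :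
    repBall φ x₁ t₁ ε ⊆ repBall φ x₂ ((1 - η) ^ 2 * t₂) (5 * ε) := by
  classical
  have h1η : 0 < 1 - η := by linarith
  have hεθ' : ε < θ := by linarith
  have hT₀1 : 1 < 1 / (1 - η) ^ 2 := by
    rw [lt_div_iff₀ (by positivity)]
    nlinarith
  have h1t₁ : 1 < t₁ := hT₀1.trans ht₁
  have h1t₂ : 1 < t₂ := hT₀1.trans ht₂
  set T : ℝ := min t₁ t₂ with hTdef
  have hT1 : 1 < T := lt_min h1t₁ h1t₂
  have hTT₀ : 1 / (1 - η) ^ 2 < T := lt_min ht₁ ht₂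
  have hTfac : 1 < (1 - η) ^ 2 * T := by
    rw [div_lt_iff₀ (by positivity)] at hTT₀
    nlinarith [hTT₀]
  set τ : ℝ := (1 - η) ^ 2 * t₂ with hτdef
  have hτ0 : 0 ≤ τ := by positivity
  have hτt₁ : τ ≤ t₁ := by
    rw [hτdef]
    nlinarith [mul_nonneg (mul_nonneg hη0.le h1η.le) (by linarith : (0:ℝ) ≤ t₂)]
  have hτt₂ : τ ≤ t₂ := by
    rw [hτdef]
    nlinarith [mul_nonneg (mul_nonneg hη0.le h1η.le) (by linarith : (0:ℝ) ≤ t₂)]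
  obtain ⟨y, hy₁, hy₂⟩ := Set.not_disjoint_iff.mp hmeet
  obtain ⟨α₁, hα₁rep, hα₁⟩ := hy₁
  obtain ⟨α₂, hα₂rep, hα₂⟩ := hy₂
  have Hα₁ := hdist x₁ y 0 t₁ le_rfl (by linarith) α₁ hα₁rep
    (fun s hs => (hα₁ s hs).trans hεθ')
  have props₁ := rep_props' hη0 hη1 h1t₁ hα₁rep Hα₁
  intro z hz
  obtain ⟨β, hβrep, hβ⟩ := hz
  have Hβ := hdist x₁ z 0 t₁ le_rfl (by linarith) β hβrep
    (fun s hs => (hβ s hs).trans hεθ')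
  have propsβ := rep_props' hη0 hη1 h1t₁ hβrep Hβ
  have hTsub₁ : Set.Icc (0:ℝ) T ⊆ Set.Icc 0 t₁ := Set.Icc_subset_Icc le_rfl (min_le_left _ _)
  have hTsub₂ : Set.Icc (0:ℝ) T ⊆ Set.Icc 0 t₂ := Set.Icc_subset_Icc le_rfl (min_le_right _ _)
  have hτsub : Set.Icc (0:ℝ) τ ⊆ Set.Icc 0 t₁ := Set.Icc_subset_Icc le_rfl hτt₁
  -- `β` stays below `(1-η) * T` on `[0, τ]`
  have hub : ∀ s ∈ Set.Icc 0 τ, β s ≤ (1 - η) * T := by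
    intro s hs
    have hβs := propsβ.2.1 s (hτsub hs)
    have hTl : 1 + η ≤ (1 - η) * T := by
      nlinarith [hTfac]
    rcases le_or_gt s 1 with h|h
    · have : max s 1 = 1 := max_eq_right h
      rw [this] at hβs
      linarith
    · have : max s 1 = s := max_eq_left h.le
      rw [this] at hβs
      have hsτ : s ≤ τ := hs.2
      have hb1 : (1 + η) * τ ≤ (1 - η) * t₁ := by nlinarith
      have hb2 : (1 + η) * τ ≤ (1 - η) * t₂ := by nlinarith
      rcases le_total t₁ t₂ with hc|hc
      · rw [hTdef, min_eq_left hc]; nlinarith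
      · rw [hTdef, min_eq_right hc]; nlinarith
  have hαT : (1 - η) * T < α₁ T := props₁.2.2 T ⟨by linarith, min_le_left _ _⟩ hT1
  have hβ0 : ∀ s ∈ Set.Icc (0:ℝ) τ, 0 ≤ β s := by
    intro s hs
    rcases eq_or_lt_of_le hs.1 with h|h
    · rw [← h, hβrep.2.2]
    · have := propsβ.1 ⟨le_rfl, by linarith⟩ (hτsub hs) h
      rw [hβrep.2.2] at this
      exact this.le
  have himg : ∀ s ∈ Set.Icc (0:ℝ) τ, β s ∈ α₁ '' Set.Icc 0 T := by
    intro s hs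
    have hmem : β s ∈ Set.Icc (α₁ 0) (α₁ T) := by
      rw [hα₁rep.2.2]
      exact ⟨hβ0 s hs, (hub s hs).trans hαT.le⟩
    exact intermediate_value_Icc (by linarith) (hα₁rep.1.mono hTsub₁) hmem
  set u : ℝ → ℝ := fun v => Function.invFunOn α₁ (Set.Icc 0 T) v with hudef
  have huprop : ∀ s ∈ Set.Icc (0:ℝ) τ, u (β s) ∈ Set.Icc (0:ℝ) T ∧ α₁ (u (β s)) = β s := by
    intro s hs
    obtain ⟨w, hw, hweq⟩ := himg s hs
    exact ⟨Function.invFunOn_mem ⟨w, hw, hweq⟩, Function.invFunOn_eq ⟨w, hw, hweq⟩⟩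
  set αn : ℝ → ℝ := fun s => α₂ (u (β s)) with hαndef
  -- continuity of `αn` on `[0, τ]` via the inverse of a closed embedding
  have hcompact : CompactSpace (Set.Icc (0:ℝ) T) := isCompact_iff_compactSpace.mp isCompact_Icc
  set g : Set.Icc (0:ℝ) T → ℝ := (Set.Icc (0:ℝ) T).restrict α₁ with hgdef
  have hgc : Continuous g := (hα₁rep.1.mono hTsub₁).restrict
  have hgi : Function.Injective g := fun a b hab =>
    Subtype.ext (hα₁rep.2.1 (hTsub₁ a.2) (hTsub₁ b.2) hab)
  have hemb : IsEmbedding g := (hgc.isClosedEmbedding hgi).toIsEmbedding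
  set e : Set.Icc (0:ℝ) T ≃ₜ Set.range g := hemb.toHomeomorph with hedef
  have hmem' : ∀ s : Set.Icc (0:ℝ) τ, β (s:ℝ) ∈ Set.range g := by
    intro s
    obtain ⟨w, hw, hweq⟩ := himg s s.2
    exact ⟨⟨w, hw⟩, hweq⟩
  have hkey : ∀ s : Set.Icc (0:ℝ) τ,
      u (β (s:ℝ)) = ((e.symm ⟨β (s:ℝ), hmem' s⟩ : Set.Icc (0:ℝ) T) : ℝ) := by
    intro s
    have h1 := huprop s s.2
    have h2 : g (e.symm ⟨β (s:ℝ), hmem' s⟩) = β (s:ℝ) :=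
      congrArg Subtype.val (e.apply_symm_apply ⟨β (s:ℝ), hmem' s⟩)
    exact hα₁rep.2.1 (hTsub₁ h1.1) (hTsub₁ (e.symm ⟨β (s:ℝ), hmem' s⟩).2) (h1.2.trans h2.symm)
  have hcont : ContinuousOn αn (Set.Icc 0 τ) := by
    rw [continuousOn_iff_continuous_restrict]
    have hβc : Continuous ((Set.Icc (0:ℝ) τ).restrict β) := (hβrep.1.mono hτsub).restrict
    have hBc : Continuous (fun s : Set.Icc (0:ℝ) τ => (⟨β (s:ℝ), hmem' s⟩ : Set.range g)) :=
      hβc.subtype_mk _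
    have hUc : Continuous (fun s : Set.Icc (0:ℝ) τ =>
        ((e.symm ⟨β (s:ℝ), hmem' s⟩ : Set.Icc (0:ℝ) T) : ℝ)) :=
      continuous_subtype_val.comp (e.symm.continuous.comp hBc)
    have heq : (Set.Icc (0:ℝ) τ).domRestrict αn = fun s : Set.Icc (0:ℝ) τ =>
        α₂ ((e.symm ⟨β (s:ℝ), hmem' s⟩ : Set.Icc (0:ℝ) T) : ℝ) := by
      funext s
      simp only [Set.domRestrict_apply, hαndef]
      rw [hkey s]
    rw [heq]
    exact hα₂rep.1.comp_continuous hUc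
      (fun s => hTsub₂ (e.symm ⟨β (s:ℝ), hmem' s⟩).2)
  have hinj : Set.InjOn αn (Set.Icc 0 τ) := by
    intro a ha b hb hab
    have h1 := huprop a ha
    have h2 := huprop b hb
    have hu : u (β a) = u (β b) := hα₂rep.2.1 (hTsub₂ h1.1) (hTsub₂ h2.1) hab
    have hβab : β a = β b := by rw [← h1.2, ← h2.2, hu]
    exact hβrep.2.1 (hτsub ha) (hτsub hb) hβab
  have h0mem : (0:ℝ) ∈ Set.Icc (0:ℝ) τ := ⟨le_rfl, hτ0⟩
  have hαn0 : αn 0 = 0 := by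
    have h1 := huprop 0 h0mem
    have hu0 : u (β 0) = 0 := hα₁rep.2.1 (hTsub₁ h1.1) ⟨le_rfl, by linarith⟩
      (by rw [h1.2, hβrep.2.2, hα₁rep.2.2])
    show α₂ (u (β 0)) = 0
    rw [hu0, hα₂rep.2.2]
  refine ⟨αn, ⟨hcont, hinj, hαn0⟩, fun s hs => ?_⟩
  have h1 := huprop s hs
  have d1 : dist (φ (α₂ (u (β s))) x₂) (φ (u (β s)) y) < ε := hα₂ _ (hTsub₂ h1.1)
  have d2 : dist (φ (u (β s)) y) (φ (α₁ (u (β s))) x₁) < ε := by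
    rw [dist_comm]
    exact hα₁ _ (hTsub₁ h1.1)
  have d3 : dist (φ (α₁ (u (β s))) x₁) (φ s z) < ε := by
    rw [h1.2]
    exact hβ s (hτsub hs)
  calc dist (φ (αn s) x₂) (φ s z)
      ≤ dist (φ (α₂ (u (β s))) x₂) (φ (u (β s)) y) + dist (φ (u (β s)) y) (φ (α₁ (u (β s))) x₁)
          + dist (φ (α₁ (u (β s))) x₁) (φ s z) := dist_triangle4 _ _ _ _
    _ < 5 * ε := by linarith

end FiveRHelpers

/-- the `5r`-lemma for reparametrization balls. -/
theorem five_r_lemma [MetricSpace X] [CompactSpace X]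
    (φ : ℝ → X → X) (hφ : IsFlow φ) (hfpf : FixedPointFree φ)
    (η θ : ℝ) (hη0 : 0 < η) (hη1 : η < 1) (hθ : 0 < θ)
    (hdist : ∀ (x y : X) (a b : ℝ), a ≤ 0 → 0 ≤ b → ∀ α : ℝ → ℝ,
      IsRepOn (Set.Icc a b) α →
      (∀ s ∈ Set.Icc a b, dist (φ (α s) x) (φ s y) < θ) →
      ∀ s ∈ Set.Icc a b, (1 < |s| → |α s - s| < η * |s|) ∧ (|s| ≤ 1 → |α s - s| < η))
    (ε : ℝ) (hε0 : 0 < ε) (hεθ : ε < θ / 2)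
    {ι : Type*} (c : ι → X × ℝ) (ht : ∀ i, 1 / (1 - η) ^ 2 < (c i).2) :
    ∃ I' : Set ι, I'.Countable ∧
      (∀ i ∈ I', ∀ j ∈ I', i ≠ j →
        Disjoint (repBall φ (c i).1 (c i).2 ε) (repBall φ (c j).1 (c j).2 ε)) ∧
      (⋃ i, repBall φ (c i).1 (c i).2 ε) ⊆
        ⋃ i ∈ I', repBall φ (c i).1 ((1 - η) ^ 2 * (c i).2) (5 * ε) := by
  classical
  have h1η : 0 < 1 - η := by linarith
  have h1η2 : 0 < 1 - η ^ 2 := by nlinarith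
  set T₀ : ℝ := 1 / (1 - η) ^ 2 with hT₀def
  have hT₀1 : 1 < T₀ := by
    rw [hT₀def, lt_div_iff₀ (by positivity)]
    nlinarith
  have hT₀pos : 0 < T₀ := by linarith
  set lam : ℝ := (1 - η ^ 2)⁻¹ with hlamdef
  have hlam1 : 1 < lam := by
    rw [hlamdef]
    rw [lt_inv_comm₀ one_pos h1η2]
    · nlinarith
  have hlampos : 0 < lam := by linarith
  set t : ι → ℝ := fun i => (c i).2 with htdef
  set B : ι → Set X := fun i => repBall φ (c i).1 (t i) ε with hBdef
  have htT₀ : ∀ i, T₀ < t i := ht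
  set L : ι → ℕ := fun i => ⌊Real.logb lam (t i / T₀)⌋₊ with hLdef
  have key1 : ∀ i, T₀ * lam ^ (L i) ≤ t i := by
    intro i
    have hr1 : 1 < t i / T₀ := (one_lt_div hT₀pos).mpr (htT₀ i)
    have h0 : (L i : ℝ) ≤ Real.logb lam (t i / T₀) :=
      Nat.floor_le (Real.logb_nonneg hlam1 hr1.le)
    have hle : lam ^ ((L i : ℝ)) ≤ t i / T₀ := by
      calc lam ^ ((L i : ℝ)) ≤ lam ^ Real.logb lam (t i / T₀) :=
            Real.rpow_le_rpow_of_exponent_le hlam1.le h0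
        _ = t i / T₀ := Real.rpow_logb hlampos hlam1.ne' (by linarith)
    rw [← Real.rpow_natCast lam (L i)]
    rw [mul_comm]
    exact (le_div_iff₀ hT₀pos).mp hle
  have key2 : ∀ i, t i < T₀ * lam ^ (L i + 1) := by
    intro i
    have hr1 : 1 < t i / T₀ := (one_lt_div hT₀pos).mpr (htT₀ i)
    have h0 : Real.logb lam (t i / T₀) < (L i : ℝ) + 1 :=
      Nat.lt_floor_add_one _
    have hlt : t i / T₀ < lam ^ (((L i : ℕ) + 1 : ℝ)) := by
      calc t i / T₀ = lam ^ Real.logb lam (t i / T₀) :=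
            (Real.rpow_logb hlampos hlam1.ne' (by linarith)).symm
        _ < lam ^ (((L i : ℕ) + 1 : ℝ)) := Real.rpow_lt_rpow_of_exponent_lt hlam1 h0
    have : lam ^ (((L i : ℕ) + 1 : ℝ)) = lam ^ (L i + 1) := by
      rw [← Real.rpow_natCast lam (L i + 1)]
      push_cast
      ring_nf
    rw [this] at hlt
    rw [mul_comm]
    exact (div_lt_iff₀ hT₀pos).mp hlt
  have hBne : ∀ i, (c i).1 ∈ B i := fun i => self_mem_repBall' φ _ hε0
  have hBself : ∀ i, ¬ Disjoint (B i) (B i) := fun i =>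
    Set.not_disjoint_iff.mpr ⟨_, hBne i, hBne i⟩
  set S : Set (Set ι) := {M | (∀ i ∈ M, ∀ j ∈ M, i ≠ j → Disjoint (B i) (B j)) ∧
    ∀ i ∈ M, ∀ k, ¬Disjoint (B k) (B i) → L k < L i →
      ∃ j ∈ M, ¬Disjoint (B k) (B j) ∧ L j ≤ L k} with hSdef
  have hSempty : (∅ : Set ι) ∈ S := ⟨fun i hi => absurd hi (Set.notMem_empty i),
    fun i hi => absurd hi (Set.notMem_empty i)⟩
  have hchains : ∀ C ⊆ S, IsChain (· ⊆ ·) C → C.Nonempty →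
      ∃ ub ∈ S, ∀ s ∈ C, s ⊆ ub := by
    intro C hCS hchain hCne
    refine ⟨⋃₀ C, ⟨?_, ?_⟩, fun s hs => Set.subset_sUnion_of_mem hs⟩
    · intro i hi j hj hij
      obtain ⟨Mi, hMi, hiMi⟩ := hi
      obtain ⟨Mj, hMj, hjMj⟩ := hj
      rcases hchain.total hMi hMj with h|h
      · exact (hCS hMj).1 i (h hiMi) j hjMj hij
      · exact (hCS hMi).1 i hiMi j (h hjMj) hij
    · intro i hi k hk hLk
      obtain ⟨Mi, hMi, hiMi⟩ := hi
      obtain ⟨j, hj, hjk⟩ := (hCS hMi).2 i hiMi k hk hLk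
      exact ⟨j, ⟨Mi, hMi, hj⟩, hjk⟩
  obtain ⟨M, -, hMmax⟩ := zorn_subset_nonempty S hchains ∅ hSempty
  have hMS : M ∈ S := hMmax.1
  have main : ∀ n : ℕ, ∀ k, L k = n → ∃ j ∈ M, ¬Disjoint (B k) (B j) ∧ L j ≤ L k := by
    intro n
    induction n using Nat.strong_induction_on with
    | _ n IH =>
      intro k hLk
      by_contra hk
      push_neg at hk
      have hk' : ∀ j ∈ M, ¬Disjoint (B k) (B j) → L k < L j := hk
      have hdisj : ∀ j ∈ M, Disjoint (B k) (B j) := by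
        intro j hj
        by_contra hnd
        obtain ⟨j', hj', hj'k, hj'L⟩ := hMS.2 j hj k hnd (hk' j hj hnd)
        exact absurd hj'L (not_le.mpr (hk' j' hj' hj'k))
      have hkM : k ∉ M := fun h => hBself k (hdisj k h)
      have hS' : insert k M ∈ S := by
        constructor
        · intro i hi j hj hij
          rcases hi with rfl|hi
          · rcases hj with rfl|hj
            · exact absurd rfl hij
            · exact hdisj j hj
          · rcases hj with rfl|hj
            · exact (hdisj i hi).symm
            · exact hMS.1 i hi j hj hij
        · intro i hi k' hk'' hLk'
          rcases hi with rfl|hi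
          · have hlt : L k' < n := hLk ▸ hLk'
            obtain ⟨j, hj, hj1, hj2⟩ := IH (L k') hlt k' rfl
            exact ⟨j, Set.mem_insert_of_mem _ hj, hj1, hj2⟩
          · obtain ⟨j, hj, hjp⟩ := hMS.2 i hi k' hk'' hLk'
            exact ⟨j, Set.mem_insert_of_mem _ hj, hjp⟩
      exact hkM (hMmax.2 hS' (Set.subset_insert k M) (Set.mem_insert k M))
  have hcnt : M.Countable := by
    apply Set.PairwiseDisjoint.countable_of_nonempty_interior (s := B)
    · intro i hi j hj hij
      exact hMS.1 i hi j hj hij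
    · intro i _
      exact interior_repBall_nonempty' hφ _ hε0
  refine ⟨M, hcnt, fun i hi j hj hij => hMS.1 i hi j hj hij, ?_⟩
  intro z hz
  rw [Set.mem_iUnion] at hz
  obtain ⟨k, hzk⟩ := hz
  obtain ⟨j, hjM, hmeet, hLjk⟩ := main (L k) k rfl
  have hcomp : (1 - η ^ 2) * t j ≤ t k := by
    have h1 : t j < T₀ * lam ^ (L j + 1) := key2 j
    have h2 : T₀ * lam ^ (L k) ≤ t k := key1 k
    have h3 : (lam : ℝ) ^ (L j + 1) ≤ lam ^ (L k + 1) :=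
      pow_le_pow_right₀ hlam1.le (by omega)
    have h4 : t j ≤ lam * t k := by
      have h5 : T₀ * lam ^ (L j + 1) ≤ T₀ * lam ^ (L k + 1) :=
        mul_le_mul_of_nonneg_left h3 hT₀pos.le
      have h6 : T₀ * lam ^ (L k + 1) = lam * (T₀ * lam ^ (L k)) := by
        rw [pow_succ]
        ring
      have h7 : lam * (T₀ * lam ^ (L k)) ≤ lam * t k :=
        mul_le_mul_of_nonneg_left h2 hlampos.le
      linarith
    have hlaminv : (1 - η ^ 2) * lam = 1 := by
      rw [hlamdef]
      exact mul_inv_cancel₀ h1η2.ne'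
    calc (1 - η ^ 2) * t j ≤ (1 - η ^ 2) * (lam * t k) :=
          mul_le_mul_of_nonneg_left h4 h1η2.le
      _ = (1 - η ^ 2) * lam * t k := by ring
      _ = t k := by rw [hlaminv, one_mul]
  refine Set.mem_iUnion₂.mpr ⟨j, hjM, ?_⟩
  exact repBall_subset_enlarged hφ hη0 hη1 hθ hdist hε0 hεθ (htT₀ k) (htT₀ j) hcomp hmeet hzk
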